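/- If a separable metrizable space X has a separable metrizable one-point connectification, then for every n ≥ 1 each of the hyperspaces K(X), F_n(X) and F(X), with the Vietoris topology, has a separable metrizable one-point connectification. -/

import Mathlib

open Set Topology

noncomputable section

/-- The Vietoris topology on the powerset of `X` induced by a topology `τ`,
generated by the sets `{F | F ⊆ U}` and `{F | F ∩ U ≠ ∅}` for `U` a nonempty `τ`-open set. -/
def VietorisTop {X : Type*} (τ : TopologicalSpace X) : TopologicalSpace (Set X) :=
  TopologicalSpace.generateFrom
    ({S : Set (Set X) | ∃ U : Set X, IsOpen[τ] U ∧ U.Nonempty ∧ S = {F : Set X | F ⊆ U}} ∪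
     {S : Set (Set X) | ∃ U : Set X, IsOpen[τ] U ∧ U.Nonempty ∧ S = {F : Set X | (F ∩ U).Nonempty}})

/-- The hyperspace `K(X)` of nonempty compact subsets of `X`. -/
def HypK (X : Type*) [TopologicalSpace X] : Type _ := {F : Set X // F.Nonempty ∧ IsCompact F}

/-- `K(X)` carries the Vietoris topology. -/
instance (X : Type*) [τ : TopologicalSpace X] : TopologicalSpace (HypK X) :=
  (VietorisTop τ).induced Subtype.val

/-- The `n`-th symmetric product `F_n(X)`: nonempty subsets of `X` with at most `n` points. -/
def HypFn (n : ℕ) (X : Type*) [TopologicalSpace X] : Type _ :=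
  {F : Set X // F.Nonempty ∧ F.Finite ∧ F.ncard ≤ n}

/-- `F_n(X)` carries the Vietoris topology. -/
instance (n : ℕ) (X : Type*) [τ : TopologicalSpace X] : TopologicalSpace (HypFn n X) :=
  (VietorisTop τ).induced Subtype.val

/-- The hyperspace `F(X)` of nonempty finite subsets of `X`. -/
def HypFin (X : Type*) [TopologicalSpace X] : Type _ := {F : Set X // F.Nonempty ∧ F.Finite}

/-- `F(X)` carries the Vietoris topology. -/
instance (X : Type*) [τ : TopologicalSpace X] : TopologicalSpace (HypFin X) :=
  (VietorisTop τ).induced Subtype.val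

/-- A space is almost zero-dimensional if every point has a neighborhood basis consisting of
sets each of which is an intersection of clopen sets. -/
def IsAZD (X : Type*) [TopologicalSpace X] : Prop :=
  ∀ x : X, ∀ U ∈ nhds x, ∃ V ∈ nhds x, V ⊆ U ∧
    ∃ C : Set (Set X), (∀ c ∈ C, IsClopen c) ∧ V = ⋂₀ C

/-- `X` is `𝒜`-cohesive: every point has a neighborhood containing no nonempty proper
subset of an element `A ∈ 𝒜` that is clopen in the subspace topology of `A`. -/
def CohesiveWrt (X : Type*) [TopologicalSpace X] (𝒜 : Set (Set X)) : Prop :=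
  ∀ x : X, ∃ U ∈ nhds x, ∀ A ∈ 𝒜, ∀ C : Set X,
    C ⊆ U → C ⊆ A → C.Nonempty → C ≠ A → ¬ IsClopen {y : A | (y : X) ∈ C}

/-- A space is cohesive if it is `{X}`-cohesive. -/
def Cohesive (X : Type*) [TopologicalSpace X] : Prop := CohesiveWrt X {Set.univ}

/-- Erdős space: the rational points of the Hilbert space `ℓ²`. -/
def ErdosSpace : Type :=
  {x : lp (fun _ : ℕ => ℝ) 2 // ∀ n : ℕ, ∃ q : ℚ, x.val n = (q : ℝ)}

instance : TopologicalSpace ErdosSpace := by unfold ErdosSpace; infer_instance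

/-- Complete Erdős space: points of `ℓ²` all of whose coordinates lie in `{0} ∪ {1/m : m ≥ 1}`. -/
def CompleteErdosSpace : Type :=
  {x : lp (fun _ : ℕ => ℝ) 2 // ∀ n : ℕ, x.val n = 0 ∨ ∃ m : ℕ, 0 < m ∧ x.val n = 1 / (m : ℝ)}

instance : TopologicalSpace CompleteErdosSpace := by unfold CompleteErdosSpace; infer_instance

/-- `X` has a separable metrizable one-point connectification: a connected separable
metrizable space containing `X` as a subspace whose remainder is a single point. -/
def HasSepMetrOnePointConnectification (X : Type*) [TopologicalSpace X] : Prop :=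
  ∃ (Y : Type) (_ : TopologicalSpace Y), TopologicalSpace.MetrizableSpace Y ∧
    TopologicalSpace.SeparableSpace Y ∧ ConnectedSpace Y ∧
    ∃ f : X → Y, Topology.IsEmbedding f ∧ ∃ p : Y, (Set.range f)ᶜ = {p}

set_option linter.unusedSectionVars false
section helperSec
namespace VietHelp
open TopologicalSpace

variable {Y : Type*}

def VGen (τ : TopologicalSpace Y) : Set (Set (Set Y)) :=
  ({S : Set (Set Y) | ∃ U : Set Y, IsOpen[τ] U ∧ U.Nonempty ∧ S = {F : Set Y | F ⊆ U}} ∪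
   {S : Set (Set Y) | ∃ U : Set Y, IsOpen[τ] U ∧ U.Nonempty ∧ S = {F : Set Y | (F ∩ U).Nonempty}})

lemma vietorisTop_eq (τ : TopologicalSpace Y) : VietorisTop τ = generateFrom (VGen τ) := rfl

/-- topology on a hyperspace-subtype -/
def HypTop (τ : TopologicalSpace Y) (P : Set Y → Prop) : TopologicalSpace {F : Set Y // P F} :=
  (VietorisTop τ).induced Subtype.val

variable {τ : TopologicalSpace Y} {P : Set Y → Prop}

lemma hypTop_eq_generateFrom :
    HypTop τ P = generateFrom ((Set.preimage (Subtype.val : {F : Set Y // P F} → Set Y)) '' VGen τ) := by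
  rw [HypTop, vietorisTop_eq, induced_generateFrom_eq]

lemma isOpen_sub (hP : ∀ F, P F → F.Nonempty) {U : Set Y} (hU : IsOpen[τ] U) :
    IsOpen[HypTop τ P] {F : {F : Set Y // P F} | F.val ⊆ U} := by
  rcases eq_empty_or_nonempty U with rfl | hne
  · convert @isOpen_empty _ (HypTop τ P)
    ext F
    simp only [mem_setOf_eq, subset_empty_iff, mem_empty_iff_false, iff_false]
    exact fun h => (hP F F.2).ne_empty h
  · exact isOpen_induced (t := VietorisTop τ)
      (TopologicalSpace.GenerateOpen.basic _ (Or.inl ⟨U, hU, hne, rfl⟩))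

lemma isOpen_hit {U : Set Y} (hU : IsOpen[τ] U) :
    IsOpen[HypTop τ P] {F : {F : Set Y // P F} | (F.val ∩ U).Nonempty} := by
  rcases eq_empty_or_nonempty U with rfl | hne
  · convert @isOpen_empty _ (HypTop τ P)
    ext F
    simp
  · exact isOpen_induced (t := VietorisTop τ)
      (TopologicalSpace.GenerateOpen.basic _ (Or.inr ⟨U, hU, hne, rfl⟩))

lemma isClosed_sub {C : Set Y} (hC : IsClosed[τ] C) :
    IsClosed[HypTop τ P] {F : {F : Set Y // P F} | F.val ⊆ C} := by
  rw [← @isOpen_compl_iff _ _ (HypTop τ P)]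
  convert isOpen_hit (U := Cᶜ) (P := P) hC.isOpen_compl using 1
  ext F
  simp only [mem_compl_iff, mem_setOf_eq]
  rw [Set.not_subset]
  constructor
  · rintro ⟨a, ha, hc⟩; exact ⟨a, ha, hc⟩
  · rintro ⟨a, ha, hc⟩; exact ⟨a, ha, hc⟩

lemma isClosed_hit (hP : ∀ F, P F → F.Nonempty) {C : Set Y} (hC : IsClosed[τ] C) :
    IsClosed[HypTop τ P] {F : {F : Set Y // P F} | (F.val ∩ C).Nonempty} := by
  rw [← @isOpen_compl_iff _ _ (HypTop τ P)]
  convert isOpen_sub (U := Cᶜ) hP hC.isOpen_compl using 1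
  ext F
  simp only [mem_compl_iff, mem_setOf_eq]
  constructor
  · intro h x hx
    by_contra hc
    exact h ⟨x, hx, not_not.mp hc⟩
  · rintro h ⟨x, hx, hxc⟩
    exact h hx hxc

lemma continuous_toHyp {Z : Type*} [tZ : TopologicalSpace Z] (g : Z → {F : Set Y // P F})
    (h1 : ∀ U : Set Y, IsOpen[τ] U → IsOpen {z | (g z).val ⊆ U})
    (h2 : ∀ U : Set Y, IsOpen[τ] U → IsOpen {z | ((g z).val ∩ U).Nonempty}) :
    Continuous[tZ, HypTop τ P] g := by
  rw [hypTop_eq_generateFrom]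
  rw [continuous_generateFrom_iff]
  rintro s ⟨m, hm, rfl⟩
  rcases hm with ⟨U, hU, -, rfl⟩ | ⟨U, hU, -, rfl⟩
  · exact h1 U hU
  · exact h2 U hU


/-- decomposition of neighbourhoods in the hyperspace topology -/
lemma nhds_decomp (F : {F : Set Y // P F}) {s : Set {F : Set Y // P F}}
    (hs : s ∈ @nhds _ (HypTop τ P) F) :
    ∃ t : Set (Set (Set Y)), t.Finite ∧ t ⊆ VGen τ ∧ (∀ m ∈ t, F.val ∈ m) ∧
      {G : {F : Set Y // P F} | ∀ m ∈ t, G.val ∈ m} ⊆ s := by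
  have hbasis := @isTopologicalBasis_of_subbasis _ (HypTop τ P) _
    (hypTop_eq_generateFrom (τ := τ) (P := P))
  rw [@IsTopologicalBasis.mem_nhds_iff _ (HypTop τ P) _ _ _ hbasis] at hs
  obtain ⟨b, ⟨g, ⟨hgfin, hgsub⟩, rfl⟩, hFb, hbs⟩ := hs
  -- every element of g is a preimage of a member of VGen τ
  have hchoice : ∀ m ∈ g, ∃ m' ∈ VGen τ, m = Subtype.val ⁻¹' m' := by
    intro m hm
    obtain ⟨m', hm', rfl⟩ := hgsub hm
    exact ⟨m', hm', rfl⟩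
  classical
  choose m' hm' heq using hchoice
  refine ⟨{v | ∃ m, ∃ hm : m ∈ g, v = m' m hm}, ?_, ?_, ?_, ?_⟩
  · have he : {v | ∃ m, ∃ hm : m ∈ g, v = m' m hm} = {y | ∃ x, ∃ hx : x ∈ g, m' x hx = y} := by
      ext v
      exact ⟨fun ⟨m, hm, h⟩ => ⟨m, hm, h.symm⟩, fun ⟨m, hm, h⟩ => ⟨m, hm, h.symm⟩⟩
    rw [he]
    exact hgfin.dependent_image m'
  · rintro v ⟨m, hm, rfl⟩; exact hm' m hm
  · rintro v ⟨m, hm, rfl⟩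
    have : F ∈ m := by
      have := hFb; rw [mem_sInter] at this; exact this m hm
    rw [heq m hm] at this; exact this
  · intro G hG
    apply hbs
    rw [mem_sInter]
    intro m hm
    have : G.val ∈ m' m hm := hG _ ⟨m, hm, rfl⟩
    rw [heq m hm]; exact this

/-- For each generator containing a nonempty F there is a point of F witnessing membership
for all subsets of F containing that point. -/
lemma gen_witness {m : Set (Set Y)} (hm : m ∈ VGen τ) {F : Set Y} (hFne : F.Nonempty)
    (hFm : F ∈ m) : ∃ x ∈ F, ∀ G : Set Y, x ∈ G → G ⊆ F → G ∈ m := by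
  rcases hm with ⟨U, hU, hne, rfl⟩ | ⟨U, hU, hne, rfl⟩
  · obtain ⟨x, hx⟩ := hFne
    exact ⟨x, hx, fun G _ hGF => hGF.trans hFm⟩
  · obtain ⟨x, hx, hxU⟩ := hFm
    exact ⟨x, hx, fun G hxG _ => ⟨x, hxG, hxU⟩⟩

section Instances
variable (T : TopologicalSpace Y)

/-- second countability of the hyperspace of compact sets -/
lemma hyp_secondCountable [SecondCountableTopology Y] {P : Set Y → Prop}
    (hP : ∀ F, P F → F.Nonempty ∧ IsCompact F) :
    @SecondCountableTopology {F : Set Y // P F} (HypTop T P) := by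
  classical
  set B := countableBasis Y with hB
  have hBbasis : IsTopologicalBasis B := isBasis_countableBasis Y
  have hBcount : B.Countable := countable_countableBasis Y
  -- countable subbasis
  set S₂ : Set (Set {F : Set Y // P F}) :=
    (fun m => Subtype.val ⁻¹' m) ''
      ({S : Set (Set Y) | ∃ t : Set (Set Y), t.Finite ∧ t ⊆ B ∧ S = {F : Set Y | F ⊆ ⋃₀ t}} ∪
       {S : Set (Set Y) | ∃ b ∈ B, S = {F : Set Y | (F ∩ b).Nonempty}}) with hS₂
  have hcount : S₂.Countable := by
    apply Set.Countable.image
    apply Set.Countable.union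
    · have : {S : Set (Set Y) | ∃ t : Set (Set Y), t.Finite ∧ t ⊆ B ∧ S = {F : Set Y | F ⊆ ⋃₀ t}}
          ⊆ (fun t : Set (Set Y) => {F : Set Y | F ⊆ ⋃₀ t}) '' {t | t.Finite ∧ t ⊆ B} := by
        rintro S ⟨t, h1, h2, rfl⟩; exact ⟨t, ⟨h1, h2⟩, rfl⟩
      apply Set.Countable.mono this
      apply Set.Countable.image
      exact countable_setOf_finite_subset hBcount
    · have : {S : Set (Set Y) | ∃ b ∈ B, S = {F : Set Y | (F ∩ b).Nonempty}}
          ⊆ (fun b : Set Y => {F : Set Y | (F ∩ b).Nonempty}) '' B := by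
        rintro S ⟨b, h1, rfl⟩; exact ⟨b, h1, rfl⟩
      exact (hBcount.image _).mono this
  have htop : HypTop T P = generateFrom S₂ := by
    apply le_antisymm
    · -- HypTop ≤ generateFrom S₂ : each S₂-element is HypTop-open
      refine @le_generateFrom _ (HypTop T P) _ ?_
      rintro s ⟨m, hm | hm, rfl⟩
      · obtain ⟨t, htfin, htB, rfl⟩ := hm
        exact isOpen_sub (fun F hF => (hP F hF).1)
          (isOpen_sUnion (fun b hb => hBbasis.isOpen (htB hb)))
      · obtain ⟨b, hb, rfl⟩ := hm
        exact isOpen_hit (hBbasis.isOpen hb)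
    · -- generateFrom S₂ ≤ HypTop
      rw [hypTop_eq_generateFrom]
      letI : TopologicalSpace {F : Set Y // P F} := generateFrom S₂
      apply le_generateFrom
      rintro s ⟨m, hm, rfl⟩
      rcases hm with ⟨U, hU, hUne, rfl⟩ | ⟨U, hU, hUne, rfl⟩
      · -- {F | F ⊆ U} : use compactness
        have : (Subtype.val ⁻¹' {F : Set Y | F ⊆ U} : Set {F : Set Y // P F}) =
            ⋃ t ∈ {t : Set (Set Y) | t.Finite ∧ t ⊆ B ∧ ⋃₀ t ⊆ U},
              Subtype.val ⁻¹' {F : Set Y | F ⊆ ⋃₀ t} := by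
          ext F
          simp only [mem_preimage, mem_setOf_eq, mem_iUnion]
          constructor
          · intro hFU
            have hcomp := (hP F F.2).2
            -- cover F.val by basis elements inside U
            have hcov : ∀ x ∈ F.val, ∃ b ∈ B, x ∈ b ∧ b ⊆ U := by
              intro x hx
              obtain ⟨b, hb, hxb, hbU⟩ := hBbasis.exists_subset_of_mem_open (hFU hx) hU
              exact ⟨b, hb, hxb, hbU⟩
            choose bfun hbB hbx hbU using hcov
            obtain ⟨s, hs⟩ := hcomp.elim_finite_subcover
              (fun x : {x // x ∈ F.val} => bfun x.val x.2)
              (fun x => hBbasis.isOpen (hbB x.val x.2))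
              (fun x hx => mem_iUnion.mpr ⟨⟨x, hx⟩, hbx x hx⟩)
            refine ⟨(fun x : {x // x ∈ F.val} => bfun x.val x.2) '' ↑s, ⟨?_, ?_, ?_⟩, ?_⟩
            · exact (s.finite_toSet).image _
            · rintro b ⟨x, -, rfl⟩; exact hbB x.val x.2
            · rintro y ⟨b, ⟨x, -, rfl⟩, hyb⟩; exact hbU x.val x.2 hyb
            · intro y hy
              obtain ⟨x, hxs, hyx⟩ := by
                have := hs hy
                simpa only [mem_iUnion, exists_prop] using this
              exact ⟨_, ⟨x, hxs, rfl⟩, hyx⟩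
          · rintro ⟨t, ⟨-, -, htU⟩, hFt⟩
            exact hFt.trans htU
        rw [this]
        apply isOpen_biUnion
        rintro t ⟨h1, h2, -⟩
        exact GenerateOpen.basic _ ⟨{F : Set Y | F ⊆ ⋃₀ t}, Or.inl ⟨t, h1, h2, rfl⟩, rfl⟩
      · -- {F | F meets U}
        have : (Subtype.val ⁻¹' {F : Set Y | (F ∩ U).Nonempty} : Set {F : Set Y // P F}) =
            ⋃ b ∈ {b | b ∈ B ∧ b ⊆ U}, Subtype.val ⁻¹' {F : Set Y | (F ∩ b).Nonempty} := by
          ext F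
          simp only [mem_preimage, mem_setOf_eq, mem_iUnion]
          constructor
          · rintro ⟨x, hxF, hxU⟩
            obtain ⟨b, hb, hxb, hbU⟩ := hBbasis.exists_subset_of_mem_open hxU hU
            exact ⟨b, ⟨hb, hbU⟩, x, hxF, hxb⟩
          · rintro ⟨b, ⟨-, hbU⟩, x, hxF, hxb⟩
            exact ⟨x, hxF, hbU hxb⟩
        rw [this]
        apply isOpen_biUnion
        rintro b ⟨h1, -⟩
        exact GenerateOpen.basic _ ⟨{F : Set Y | (F ∩ b).Nonempty}, Or.inr ⟨b, h1, rfl⟩, rfl⟩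
  have hbasis2 := @isTopologicalBasis_of_subbasis _ (HypTop T P) _ htop
  exact @IsTopologicalBasis.secondCountableTopology _ (HypTop T P) _ hbasis2
    (((countable_setOf_finite_subset hcount)).image _)

lemma hyp_t1 [T2Space Y] {P : Set Y → Prop}
    (hP : ∀ F, P F → F.Nonempty ∧ IsCompact F) :
    @T1Space {F : Set Y // P F} (HypTop T P) := by
  letI : TopologicalSpace {F : Set Y // P F} := HypTop T P
  rw [t1Space_iff_exists_open]
  intro G F hGF
  by_cases hsub : G.val ⊆ F.val
  · -- G ⊊ F : separate with a co-singleton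
    have : ∃ x, x ∈ F.val ∧ x ∉ G.val := by
      by_contra hc
      push_neg at hc
      exact hGF (Subtype.ext (le_antisymm hsub hc))
    obtain ⟨x, hxF, hxG⟩ := this
    refine ⟨{H : {F : Set Y // P F} | H.val ⊆ {x}ᶜ}, ?_, ?_, ?_⟩
    · exact isOpen_sub (fun F hF => (hP F hF).1) isClosed_singleton.isOpen_compl
    · intro y hy
      simp only [mem_compl_iff, mem_singleton_iff]
      exact fun h => hxG (h ▸ hy)
    · simp only [mem_setOf_eq]
      intro hc
      exact (hc hxF) rfl
  · -- some point of G is outside F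
    obtain ⟨x, hxG, hxF⟩ := not_subset.mp hsub
    refine ⟨{H : {F : Set Y // P F} | (H.val ∩ (F.val)ᶜ).Nonempty}, ?_, ⟨x, hxG, hxF⟩, ?_⟩
    · exact isOpen_hit ((hP F F.2).2.isClosed).isOpen_compl
    · simp only [mem_setOf_eq]
      rintro ⟨y, hyF, hyFc⟩
      exact hyFc hyF

lemma hyp_regular {Y : Type*} [M : MetricSpace Y] {P : Set Y → Prop}
    (hP : ∀ F, P F → F.Nonempty ∧ IsCompact F) :
    @RegularSpace {F : Set Y // P F} (HypTop M.toUniformSpace.toTopologicalSpace P) := by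
  letI T : TopologicalSpace Y := M.toUniformSpace.toTopologicalSpace
  letI : TopologicalSpace {F : Set Y // P F} := HypTop T P
  apply RegularSpace.of_exists_mem_nhds_isClosed_subset
  intro F s hs
  obtain ⟨t, htfin, htgen, hFmem, hsub⟩ := nhds_decomp F hs
  -- for each generator, a closed neighbourhood inside it
  have key : ∀ m : Set (Set Y), ∃ N : Set {F : Set Y // P F},
      N ∈ 𝓝 F ∧ IsClosed N ∧ (m ∈ t → N ⊆ {G : {F : Set Y // P F} | G.val ∈ m}) := by
    intro m
    by_cases hm : m ∈ t
    · rcases htgen hm with ⟨U, hU, hUne, rfl⟩ | ⟨U, hU, hUne, rfl⟩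
      · -- m = {F | F ⊆ U}
        have hFU : F.val ⊆ U := hFmem _ hm
        obtain ⟨δ, hδpos, hδ⟩ := ((hP F F.2).2).exists_cthickening_subset_open hU hFU
        refine ⟨{H | H.val ⊆ Metric.cthickening δ F.val}, ?_, ?_, ?_⟩
        · apply Filter.mem_of_superset
            (IsOpen.mem_nhds (isOpen_sub (fun F hF => (hP F hF).1)
              (Metric.isOpen_thickening (δ := δ) (E := F.val))) ?_)
          · intro H hH
            exact hH.trans (Metric.thickening_subset_cthickening δ F.val)
          · exact Metric.self_subset_thickening hδpos F.val
        · exact isClosed_sub Metric.isClosed_cthickening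
        · intro _ H hH
          exact hH.trans hδ
      · -- m = {F | F meets U}
        obtain ⟨x, hxF, hxU⟩ := hFmem _ hm
        obtain ⟨r, hrpos, hrU⟩ := Metric.isOpen_iff.mp hU x hxU
        refine ⟨{H | (H.val ∩ Metric.closedBall x (r/2)).Nonempty}, ?_, ?_, ?_⟩
        · apply Filter.mem_of_superset
            (IsOpen.mem_nhds (isOpen_hit (Metric.isOpen_ball (x := x) (ε := r/2))) ?_)
          · intro H hH
            exact hH.mono (inter_subset_inter_right _ Metric.ball_subset_closedBall)
          · exact ⟨x, hxF, Metric.mem_ball_self (by linarith)⟩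
        · exact isClosed_hit (fun F hF => (hP F hF).1) Metric.isClosed_closedBall
        · rintro _ H ⟨y, hyH, hyB⟩
          refine ⟨y, hyH, hrU ?_⟩
          have := Metric.mem_closedBall.mp hyB
          exact Metric.mem_ball.mpr (lt_of_le_of_lt this (by linarith))
    · exact ⟨univ, Filter.univ_mem, isClosed_univ, fun h => absurd h hm⟩
  choose N hN1 hN2 hN3 using key
  refine ⟨⋂ m ∈ t, N m, ?_, ?_, ?_⟩
  · exact (Filter.biInter_mem htfin).mpr (fun m _ => hN1 m)
  · exact isClosed_biInter (fun m _ => hN2 m)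
  · intro G hG
    apply hsub
    intro m hm
    exact hN3 m hm (mem_iInter₂.mp hG m hm)

end Instances
section Connect
variable {Y : Type*} [T : TopologicalSpace Y] [ConnectedSpace Y] [T1Space Y] (p : Y)

/-- every nonempty open subset of `Y \ {p}` which is closed in `Y \ {p}` has `p`
in its closure. -/
lemma clopen_closure_mem {W : Set Y} (hW : IsOpen W) (hWc : closure W ⊆ W ∪ {p})
    (hne : W.Nonempty) (hp : p ∉ W) : p ∈ closure W := by
  by_contra hc
  have hclosed : IsClosed W := by
    apply isClosed_of_closure_subset
    intro y hy
    rcases hWc hy with h | h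
    · exact h
    · exact absurd (mem_singleton_iff.mp h ▸ hy) hc
  rcases isClopen_iff.mp ⟨hclosed, hW⟩ with h | h
  · exact hne.ne_empty h
  · exact hp (h ▸ mem_univ p)

/-- the one-point connectification of the n-th power inside `Y^n` -/
def Tset (n : ℕ) : Set (Fin n → Y) := {v | (∀ i, v i ≠ p) ∨ v = fun _ => p}

lemma pbar_mem (n : ℕ) : (fun _ => p) ∈ Tset p n := Or.inr rfl

lemma clopen_in_Tn {n : ℕ} {D : Set ↥(Tset p n)} (hD : IsClopen D) (hne : D.Nonempty) :
    (⟨fun _ => p, pbar_mem p n⟩ : ↥(Tset p n)) ∈ D := by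
  set pbar : ↥(Tset p n) := ⟨fun _ => p, pbar_mem p n⟩ with hpbar
  suffices h : pbar ∈ closure D by
    exact hD.isClosed.closure_subset h
  rw [mem_closure_iff_nhds]
  intro s hs
  rw [nhds_subtype, Filter.mem_comap] at hs
  obtain ⟨s', hs', hsub⟩ := hs
  rw [nhds_pi, Filter.mem_pi] at hs'
  obtain ⟨I, hIfin, V, hV, hVs⟩ := hs'
  -- an open set around p contained in all V i
  have hO : ∀ i, ∃ O : Set Y, IsOpen O ∧ p ∈ O ∧ O ⊆ V i := by
    intro i
    obtain ⟨O, hO1, hO2, hO3⟩ := mem_nhds_iff.mp (hV i)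
    exact ⟨O, hO2, hO3, hO1⟩
  choose O hOopen hOmem hOsub using hO
  set U : Set Y := ⋂ i, O i with hU
  have hUopen : IsOpen U := isOpen_iInter_of_finite hOopen
  have hUmem : p ∈ U := mem_iInter.mpr hOmem
  -- main claim : we can move a point of D into U coordinatewise
  have main : ∀ k : ℕ, ∃ w : ↥(Tset p n), w ∈ D ∧ ∀ i : Fin n, (i : ℕ) < k → w.val i ∈ U := by
    intro k
    induction k with
    | zero => obtain ⟨w, hw⟩ := hne; exact ⟨w, hw, fun i h => absurd h (Nat.not_lt_zero _)⟩
    | succ k ih =>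
      obtain ⟨w, hwD, hwU⟩ := ih
      rcases w.2 with hwp | hwp
      · -- all coordinates of w avoid p
        by_cases hkn : k < n
        · set i₀ : Fin n := ⟨k, hkn⟩ with hi₀
          -- the replacement map
          have hmemT : ∀ y : ↥({p}ᶜ : Set Y), (fun j => if j = i₀ then y.val else w.val j) ∈ Tset p n := by
            intro y
            left
            intro j
            by_cases h : j = i₀
            · simp only [h, if_true]
              exact fun hc => y.2 (mem_singleton_iff.mpr hc)
            · simpa [h] using hwp j
          set φ : ↥({p}ᶜ : Set Y) → ↥(Tset p n) :=
            fun y => ⟨fun j => if j = i₀ then y.val else w.val j, hmemT y⟩ with hφ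
          have hφcont : Continuous φ := by
            apply Continuous.subtype_mk
            apply continuous_pi
            intro j
            by_cases h : j = i₀
            · simpa [h] using continuous_subtype_val
            · simpa [h] using continuous_const
          set W' : Set ↥({p}ᶜ : Set Y) := φ ⁻¹' D with hW'
          have hW'clopen : IsClopen W' := ⟨hD.1.preimage hφcont, hD.2.preimage hφcont⟩
          have hW'ne : W'.Nonempty := by
            refine ⟨⟨w.val i₀, hwp i₀⟩, ?_⟩
            show φ _ ∈ D
            have : φ ⟨w.val i₀, hwp i₀⟩ = w := by
              apply Subtype.ext
              funext j
              by_cases h : j = i₀ <;> simp [φ, h]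
            rw [this]; exact hwD
          set W : Set Y := Subtype.val '' W' with hWdef
          have hWopen : IsOpen W :=
            (isClosed_singleton.isOpen_compl).isOpenMap_subtype_val _ hW'clopen.2
          have hWp : p ∉ W := by
            rintro ⟨y, -, hy⟩
            exact y.2 (mem_singleton_iff.mpr hy)
          have hWclosure : closure W ⊆ W ∪ {p} := by
            intro y hy
            by_cases hyp : y = p
            · exact Or.inr (mem_singleton_iff.mpr hyp)
            · left
              have : (⟨y, hyp⟩ : ↥({p}ᶜ : Set Y)) ∈ closure W' := closure_subtype.mpr hy
              exact ⟨⟨y, hyp⟩, hW'clopen.1.closure_subset this, rfl⟩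
          have hWne : W.Nonempty := hW'ne.image _
          have hpclos := clopen_closure_mem p hWopen hWclosure hWne hWp
          obtain ⟨y, hyU, hyW⟩ := mem_closure_iff.mp hpclos U hUopen hUmem
          obtain ⟨y', hy'W', rfl⟩ := hyW
          refine ⟨φ y', hy'W', ?_⟩
          intro i hik
          by_cases h : i = i₀
          · simpa [φ, h] using hyU
          · have : (i : ℕ) < k := by
              rcases Nat.lt_succ_iff_lt_or_eq.mp hik with h' | h'
              · exact h'
              · exact absurd (Fin.ext h' : i = i₀) h
            simpa [φ, h] using hwU i this
        · -- k ≥ n : nothing new to check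
          refine ⟨w, hwD, fun i hik => ?_⟩
          exact hwU i (lt_of_lt_of_le i.2 (Nat.le_of_not_lt hkn))
      · -- w is the constant p tuple
        refine ⟨w, hwD, fun i _ => ?_⟩
        rw [hwp]; exact hUmem
  obtain ⟨w, hwD, hwU⟩ := main n
  refine ⟨w, hsub ?_, hwD⟩
  show w.val ∈ s'
  apply hVs
  intro i _
  exact hOsub i (mem_iInter.mp (hwU i i.2) i)

lemma preconnected_Tn (n : ℕ) : PreconnectedSpace ↥(Tset p n) := by
  constructor
  intro u v hu hv hcov hune hvne
  by_contra hc
  rw [Set.not_nonempty_iff_eq_empty] at hc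
  have huv : u ∩ v = ∅ := by
    rw [← hc]; ext x; simp
  have hvcompl : v = uᶜ := by
    ext x
    constructor
    · intro hxv hxu
      have : x ∈ u ∩ v := ⟨hxu, hxv⟩
      rw [huv] at this
      exact this
    · intro hxu
      rcases hcov (mem_univ x) with h | h
      · exact absurd h hxu
      · exact h
  have huclopen : IsClopen u := ⟨by rw [← compl_compl u, ← hvcompl]; exact hv.isClosed_compl, hu⟩
  have hvclopen : IsClopen v := ⟨by rw [hvcompl]; exact hu.isClosed_compl, by rw [hvcompl]; exact huclopen.1.isOpen_compl⟩
  obtain ⟨x, -, hxu⟩ := hune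
  obtain ⟨y, -, hyv⟩ := hvne
  have h1 := clopen_in_Tn p huclopen ⟨x, hxu⟩
  have h2 := clopen_in_Tn p hvclopen ⟨y, hyv⟩
  have : _ ∈ u ∩ v := ⟨h1, h2⟩
  rw [huv] at this
  exact this

end Connect

section HypConnect
variable {Y : Type*} [T : TopologicalSpace Y] [ConnectedSpace Y] [T1Space Y] (p : Y)

lemma continuous_rangeSet (n : ℕ) :
    Continuous[Pi.topologicalSpace, VietorisTop T] (fun v : Fin n → Y => Set.range v) := by
  rw [vietorisTop_eq, continuous_generateFrom_iff]
  rintro s (⟨U, hU, -, rfl⟩ | ⟨U, hU, -, rfl⟩)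
  · have : ((fun v : Fin n → Y => Set.range v) ⁻¹' {F | F ⊆ U}) = ⋂ i, (fun v : Fin n → Y => v i) ⁻¹' U := by
      ext v
      simp [Set.range_subset_iff]
    rw [this]
    exact isOpen_iInter_of_finite (fun i => (continuous_apply i : Continuous fun v : Fin n → Y => v i).isOpen_preimage U hU)
  · have : ((fun v : Fin n → Y => Set.range v) ⁻¹' {F | (F ∩ U).Nonempty}) = ⋃ i, (fun v : Fin n → Y => v i) ⁻¹' U := by
      ext v
      constructor
      · rintro ⟨y, ⟨i, rfl⟩, hyU⟩
        exact mem_iUnion.mpr ⟨i, hyU⟩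
      · intro hv
        obtain ⟨i, hi⟩ := mem_iUnion.mp hv
        exact ⟨v i, ⟨i, rfl⟩, hi⟩
    rw [this]
    exact isOpen_iUnion (fun i => (continuous_apply i : Continuous fun v : Fin n → Y => v i).isOpen_preimage U hU)

/-- the finite subsets of cardinality at most n, plus the point at infinity -/
def Bn (n : ℕ) : Set (Set Y) :=
  {F | (F.Nonempty ∧ F.Finite ∧ F.ncard ≤ n) ∧ (F ⊆ {p}ᶜ ∨ F = {p})}

lemma exists_range_eq {F : Set Y} (hne : F.Nonempty) (hfin : F.Finite) {n : ℕ}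
    (hcard : F.ncard ≤ n) : ∃ v : Fin n → Y, Set.range v = F := by
  classical
  obtain ⟨x₀, hx₀⟩ := hne
  set l : List Y := hfin.toFinset.toList with hl
  have hlen : l.length = F.ncard := by
    rw [hl, Finset.length_toList, ← Set.ncard_eq_toFinset_card F hfin]
  have hmem : ∀ y, y ∈ l ↔ y ∈ F := by
    intro y
    rw [hl, Finset.mem_toList, Set.Finite.mem_toFinset]
  refine ⟨fun i => l.getD i x₀, ?_⟩
  apply Set.eq_of_subset_of_subset
  · rintro y ⟨i, rfl⟩
    show l.getD (i : ℕ) x₀ ∈ F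
    by_cases h : (i : ℕ) < l.length
    · rw [List.getD_eq_getElem l x₀ h]
      exact (hmem _).mp (List.getElem_mem h)
    · rw [List.getD_eq_default l x₀ (Nat.le_of_not_lt h)]
      exact hx₀
  · intro y hy
    obtain ⟨j, hj, hjy⟩ := List.mem_iff_getElem.mp ((hmem y).mpr hy)
    have hjn : j < n := lt_of_lt_of_le (hlen ▸ hj) hcard
    refine ⟨⟨j, hjn⟩, ?_⟩
    show l.getD j x₀ = y
    rw [List.getD_eq_getElem l x₀ hj]
    exact hjy

lemma rangeSet_Tn_eq (n : ℕ) :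
    (fun v : Fin (n+1) → Y => Set.range v) '' (Tset p (n+1)) = Bn p (n+1) := by
  apply Set.eq_of_subset_of_subset
  · rintro F ⟨v, hv, rfl⟩
    constructor
    · refine ⟨range_nonempty v, finite_range v, ?_⟩
      show (Set.range v).ncard ≤ n + 1
      rw [← Set.image_univ]
      calc (v '' univ).ncard ≤ (univ : Set (Fin (n+1))).ncard := Set.ncard_image_le finite_univ
        _ = n + 1 := by rw [Set.ncard_univ]; simp
    · rcases hv with hv | hv
      · left
        rintro y ⟨i, rfl⟩
        exact hv i
      · right
        rw [hv]
        exact Set.range_const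
  · rintro F ⟨⟨hne, hfin, hcard⟩, hF⟩
    obtain ⟨v, rfl⟩ := exists_range_eq hne hfin hcard
    refine ⟨v, ?_, rfl⟩
    rcases hF with hF | hF
    · left
      intro i
      exact hF ⟨i, rfl⟩
    · right
      funext i
      have : v i ∈ Set.range v := ⟨i, rfl⟩
      rw [hF] at this
      exact this

lemma isPreconnected_Bn (n : ℕ) : @IsPreconnected (Set Y) (VietorisTop T) (Bn p (n+1)) := by
  rw [← rangeSet_Tn_eq]
  letI : TopologicalSpace (Set Y) := VietorisTop T
  have h1 : IsPreconnected (Tset p (n+1)) :=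
    isPreconnected_iff_preconnectedSpace.mpr (preconnected_Tn p (n+1))
  exact h1.image _ ((continuous_rangeSet (T := T) (n+1)).continuousOn)

lemma pmem_Bn (n : ℕ) : {p} ∈ Bn p (n+1) := by
  refine ⟨⟨singleton_nonempty p, finite_singleton p, ?_⟩, Or.inr rfl⟩
  rw [Set.ncard_singleton]
  omega

/-- finite nonempty sets, plus the point at infinity -/
def BFin : Set (Set Y) := {F | (F.Nonempty ∧ F.Finite) ∧ (F ⊆ {p}ᶜ ∨ F = {p})}

lemma bFin_eq_iUnion : BFin p = ⋃ n : ℕ, Bn p (n+1) := by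
  apply Set.eq_of_subset_of_subset
  · rintro F ⟨⟨hne, hfin⟩, hF⟩
    exact mem_iUnion.mpr ⟨F.ncard, ⟨hne, hfin, Nat.le_succ_of_le le_rfl⟩, hF⟩
  · intro F hF
    obtain ⟨n, ⟨hne, hfin, -⟩, h⟩ := mem_iUnion.mp hF
    exact ⟨⟨hne, hfin⟩, h⟩

lemma isPreconnected_bFin : @IsPreconnected (Set Y) (VietorisTop T) (BFin p) := by
  rw [bFin_eq_iUnion]
  have : (⋃ n : ℕ, Bn p (n+1)) = ⋃₀ (Set.range (fun n : ℕ => Bn p (n+1))) := by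
    rw [Set.sUnion_range]
  rw [this]
  apply @isPreconnected_sUnion (Set Y) (VietorisTop T) {p}
  · rintro s ⟨n, rfl⟩
    exact pmem_Bn p n
  · rintro s ⟨n, rfl⟩
    exact isPreconnected_Bn p n

/-- nonempty compact sets, plus the point at infinity -/
def BK : Set (Set Y) := {F | (F.Nonempty ∧ IsCompact F) ∧ (F ⊆ {p}ᶜ ∨ F = {p})}

lemma bK_subset_closure_bFin : BK p ⊆ @closure (Set Y) (VietorisTop T) (BFin p) := by
  classical
  intro F hF
  letI : TopologicalSpace (Set Y) := VietorisTop T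
  rw [mem_closure_iff_nhds]
  intro s hs
  have hbasis := @isTopologicalBasis_of_subbasis (Set Y) (VietorisTop T) _ (vietorisTop_eq T)
  rw [@IsTopologicalBasis.mem_nhds_iff _ (VietorisTop T) _ _ _ hbasis] at hs
  obtain ⟨b, ⟨g, ⟨hgfin, hgsub⟩, rfl⟩, hFb, hbs⟩ := hs
  obtain ⟨x₀, hx₀⟩ := hF.1.1
  have hwit : ∀ m ∈ g, ∃ x ∈ F, ∀ G : Set Y, x ∈ G → G ⊆ F → G ∈ m := by
    intro m hm
    exact gen_witness (hgsub hm) hF.1.1 (mem_sInter.mp hFb m hm)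
  choose xm hxm1 hxm2 using hwit
  set G : Set Y := insert x₀ {y | ∃ m, ∃ hm : m ∈ g, y = xm m hm} with hG
  have hGfin : G.Finite := by
    apply Set.Finite.insert
    have he : {y | ∃ m, ∃ hm : m ∈ g, y = xm m hm} = {y | ∃ m, ∃ hm : m ∈ g, xm m hm = y} := by
      ext y
      exact ⟨fun ⟨m, hm, h⟩ => ⟨m, hm, h.symm⟩, fun ⟨m, hm, h⟩ => ⟨m, hm, h.symm⟩⟩
    rw [he]
    exact hgfin.dependent_image _
  have hGsub : G ⊆ F := by
    rintro y (rfl | ⟨m, hm, rfl⟩)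
    · exact hx₀
    · exact hxm1 m hm
  have hGne : G.Nonempty := ⟨x₀, mem_insert _ _⟩
  refine ⟨G, ?_, ?_⟩
  · apply hbs
    rw [mem_sInter]
    intro m hm
    exact hxm2 m hm G (mem_insert_iff.mpr (Or.inr ⟨m, hm, rfl⟩)) hGsub
  · refine ⟨⟨hGne, hGfin⟩, ?_⟩
    rcases hF.2 with h | h
    · exact Or.inl (hGsub.trans h)
    · right
      rw [h] at hGsub
      exact (Set.Nonempty.subset_singleton_iff hGne).mp hGsub

lemma isConnected_bK : @IsConnected (Set Y) (VietorisTop T) (BK p) := by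
  constructor
  · exact ⟨{p}, ⟨singleton_nonempty p, isCompact_singleton⟩, Or.inr rfl⟩
  · apply @IsPreconnected.subset_closure (Set Y) (VietorisTop T) _ _ (isPreconnected_bFin p)
    · rintro F ⟨⟨hne, hfin⟩, h⟩
      exact ⟨⟨hne, hfin.isCompact⟩, h⟩
    · exact bK_subset_closure_bFin p

lemma isConnected_bFin : @IsConnected (Set Y) (VietorisTop T) (BFin p) :=
  ⟨⟨{p}, ⟨singleton_nonempty p, finite_singleton p⟩, Or.inr rfl⟩, isPreconnected_bFin p⟩

lemma isConnected_bn (n : ℕ) : @IsConnected (Set Y) (VietorisTop T) (Bn p (n+1)) :=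
  ⟨⟨{p}, pmem_Bn p n⟩, isPreconnected_Bn p n⟩

end HypConnect

section Embed
variable {X Y : Type*} [τX : TopologicalSpace X] [τY : TopologicalSpace Y]

lemma hyp_embedding {f : X → Y} (hf : Topology.IsEmbedding f)
    {P : Set X → Prop} {Q : Set Y → Prop}
    (hPne : ∀ F, P F → F.Nonempty)
    (hPQ : ∀ F, P F → Q (f '' F)) :
    @Topology.IsEmbedding _ _ (HypTop τX P) (HypTop τY Q)
      (fun F : {F : Set X // P F} => (⟨f '' F.val, hPQ _ F.2⟩ : {G : Set Y // Q G})) := by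
  set m : {F : Set X // P F} → {G : Set Y // Q G} :=
    fun F => ⟨f '' F.val, hPQ _ F.2⟩ with hm
  have hinj : Function.Injective m := by
    intro F G h
    apply Subtype.ext
    have := congrArg Subtype.val h
    exact Set.image_injective.mpr hf.injective this
  have hgoal : HypTop τX P = TopologicalSpace.induced m (HypTop τY Q) := by
    have hcomp : TopologicalSpace.induced m (HypTop τY Q)
        = TopologicalSpace.induced (fun F : {F : Set X // P F} => f '' F.val) (VietorisTop τY) := by
      rw [HypTop, induced_compose]
      rfl
    rw [hcomp, vietorisTop_eq, induced_generateFrom_eq, HypTop, vietorisTop_eq,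
      induced_generateFrom_eq]
    apply le_antisymm
    · -- Y-side-pulled ≤ X-side
      letI tL : TopologicalSpace {F : Set X // P F} :=
        generateFrom ((fun s => (Subtype.val : {F : Set X // P F} → Set X) ⁻¹' s) '' VGen τX)
      have hLeq : tL = HypTop τX P := by
        rw [HypTop, vietorisTop_eq, induced_generateFrom_eq]
      apply le_generateFrom
      rintro s ⟨mg, hmg, rfl⟩
      rcases hmg with ⟨V, hV, hVne, rfl⟩ | ⟨V, hV, hVne, rfl⟩
      · have heq : ((fun F : {F : Set X // P F} => f '' F.val) ⁻¹' {G : Set Y | G ⊆ V})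
            = {F : {F : Set X // P F} | F.val ⊆ f ⁻¹' V} := by
          ext F
          simp only [mem_preimage, mem_setOf_eq]
          rw [Set.image_subset_iff]
        rw [heq]
        have := isOpen_sub (τ := τX) (P := P) hPne (hf.continuous.isOpen_preimage V hV)
        rw [← hLeq] at this
        exact this
      · have heq : ((fun F : {F : Set X // P F} => f '' F.val) ⁻¹' {G : Set Y | (G ∩ V).Nonempty})
            = {F : {F : Set X // P F} | (F.val ∩ f ⁻¹' V).Nonempty} := by
          ext F
          simp only [mem_preimage, mem_setOf_eq]
          constructor
          · rintro ⟨y, ⟨x, hxF, rfl⟩, hyV⟩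
            exact ⟨x, hxF, hyV⟩
          · rintro ⟨x, hxF, hxV⟩
            exact ⟨f x, ⟨x, hxF, rfl⟩, hxV⟩
        rw [heq]
        have := isOpen_hit (τ := τX) (P := P) (hf.continuous.isOpen_preimage V hV)
        rw [← hLeq] at this
        exact this

    · -- generateFrom X-side ≤ generateFrom Y-side-pulled
      letI tR : TopologicalSpace {F : Set X // P F} :=
        generateFrom ((fun s => (fun F : {F : Set X // P F} => f '' F.val) ⁻¹' s) '' VGen τY)
      apply le_generateFrom
      rintro s ⟨mg, hmg, rfl⟩
      rcases hmg with ⟨U, hU, hUne, rfl⟩ | ⟨U, hU, hUne, rfl⟩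
      · -- {F | F.val ⊆ U}
        obtain ⟨V, hV, hUV⟩ := hf.isInducing.isOpen_iff.mp hU
        have heq : (Subtype.val ⁻¹' {F : Set X | F ⊆ U} : Set {F : Set X // P F})
            = (fun F : {F : Set X // P F} => f '' F.val) ⁻¹' {G : Set Y | G ⊆ V} := by
          ext F
          simp only [mem_preimage, mem_setOf_eq]
          rw [← hUV, Set.image_subset_iff]
        rw [heq]
        apply GenerateOpen.basic
        refine ⟨{G : Set Y | G ⊆ V}, Or.inl ⟨V, hV, ?_, rfl⟩, rfl⟩
        · obtain ⟨x, hx⟩ := hUne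
          rw [← hUV] at hx
          exact ⟨f x, hx⟩
      · -- {F | F meets U}
        obtain ⟨V, hV, hUV⟩ := hf.isInducing.isOpen_iff.mp hU
        have heq : (Subtype.val ⁻¹' {F : Set X | (F ∩ U).Nonempty} : Set {F : Set X // P F})
            = (fun F : {F : Set X // P F} => f '' F.val) ⁻¹' {G : Set Y | (G ∩ V).Nonempty} := by
          ext F
          simp only [mem_preimage, mem_setOf_eq]
          constructor
          · rintro ⟨x, hxF, hxU⟩
            rw [← hUV] at hxU
            exact ⟨f x, ⟨x, hxF, rfl⟩, hxU⟩
          · rintro ⟨y, ⟨x, hxF, rfl⟩, hyV⟩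
            refine ⟨x, hxF, ?_⟩
            rw [← hUV]
            exact hyV
        rw [heq]
        apply GenerateOpen.basic
        refine ⟨{G : Set Y | (G ∩ V).Nonempty}, Or.inr ⟨V, hV, ?_, rfl⟩, rfl⟩
        · obtain ⟨x, hx⟩ := hUne
          rw [← hUV] at hx
          exact ⟨f x, hx⟩
  exact @Topology.IsEmbedding.mk _ _ (HypTop τX P) (HypTop τY Q) m
    (@Topology.IsInducing.mk _ _ (HypTop τX P) (HypTop τY Q) m hgoal) hinj
end Embed

section Assemble

theorem assemble {X : Type*} [τX : TopologicalSpace X]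
    (P : Set X → Prop) (Y : Type) [tY : TopologicalSpace Y]
    [TopologicalSpace.MetrizableSpace Y] [TopologicalSpace.SeparableSpace Y] [ConnectedSpace Y]
    (f : X → Y) (hf : Topology.IsEmbedding f) (p : Y) (hXp : Set.range f = {p}ᶜ)
    (R : Set Y → Prop)
    (hP : ∀ F, P F → F.Nonempty)
    (hQcomp : ∀ G, R G → (G ⊆ {p}ᶜ ∨ G = {p}) → G.Nonempty ∧ IsCompact G)
    (hPQ : ∀ F, P F → R (f '' F))
    (hQP : ∀ G, R G → G ⊆ Set.range f → P (f ⁻¹' G))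
    (hRp : R {p})
    (hconn : @IsConnected (Set Y) (VietorisTop tY) {G : Set Y | R G ∧ (G ⊆ {p}ᶜ ∨ G = {p})}) :
    @HasSepMetrOnePointConnectification {F : Set X // P F} (HypTop τX P) := by
  classical
  letI : MetricSpace Y := TopologicalSpace.metrizableSpaceMetric Y
  haveI : @SecondCountableTopology Y tY := UniformSpace.secondCountable_of_separable Y
  set Q : Set Y → Prop := fun G => R G ∧ (G ⊆ {p}ᶜ ∨ G = {p}) with hQdef
  have hQne : ∀ G, Q G → G.Nonempty ∧ IsCompact G := fun G h => hQcomp G h.1 h.2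
  have hpnotin : p ∉ Set.range f := by
    rw [hXp]; exact fun h => h rfl
  -- the hyperspace connectification
  letI tZ : TopologicalSpace {G : Set Y // Q G} := HypTop tY Q
  -- instances
  haveI hsc : @SecondCountableTopology {G : Set Y // Q G} (HypTop tY Q) :=
    hyp_secondCountable tY hQne
  haveI ht1 : @T1Space {G : Set Y // Q G} (HypTop tY Q) := hyp_t1 tY hQne
  haveI hreg : @RegularSpace {G : Set Y // Q G} (HypTop tY Q) := hyp_regular hQne
  haveI ht3 : @T3Space {G : Set Y // Q G} (HypTop tY Q) := instT3Space
  haveI hmetr : TopologicalSpace.MetrizableSpace {G : Set Y // Q G} :=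
    TopologicalSpace.metrizableSpace_of_t3_secondCountable _
  haveI hsep : TopologicalSpace.SeparableSpace {G : Set Y // Q G} := inferInstance
  -- connectedness
  haveI hconn' : ConnectedSpace {G : Set Y // Q G} := by
    letI : TopologicalSpace (Set Y) := VietorisTop tY
    exact Subtype.connectedSpace hconn
  -- the embedding
  have hPQ' : ∀ F, P F → Q (f '' F) := by
    intro F hPF
    refine ⟨hPQ F hPF, Or.inl ?_⟩
    rw [← hXp]
    exact Set.image_subset_range f F
  have hemb := hyp_embedding hf hP hPQ'
  refine ⟨{G : Set Y // Q G}, HypTop tY Q, hmetr, hsep, hconn',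
    (fun F : {F : Set X // P F} => (⟨f '' F.val, hPQ' _ F.2⟩ : {G : Set Y // Q G})), hemb,
    ⟨{p}, hRp, Or.inr rfl⟩, ?_⟩
  -- complement of the range is the point at infinity
  ext G
  simp only [mem_compl_iff, Set.mem_range, mem_singleton_iff]
  constructor
  · intro hG
    rcases G.2.2 with hsub | hp1
    · exfalso
      apply hG
      have hsubr : G.val ⊆ Set.range f := by rw [hXp]; exact hsub
      have himg : f '' (f ⁻¹' G.val) = G.val := Set.image_preimage_eq_of_subset hsubr
      refine ⟨⟨f ⁻¹' G.val, hQP G.val G.2.1 hsubr⟩, ?_⟩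
      apply Subtype.ext
      exact himg
    · exact Subtype.ext hp1
  · rintro rfl
    rintro ⟨F, hF⟩
    have : f '' F.val = {p} := congrArg Subtype.val hF
    have hpin : p ∈ f '' F.val := by rw [this]; exact rfl
    obtain ⟨x, -, hx⟩ := hpin
    exact hpnotin ⟨x, hx⟩

end Assemble

end VietHelp
end helperSec

/-- If a separable metrizable space `X` has a separable metrizable one-point
connectification, then so do `K(X)`, `F_n(X)` (for every `n ≥ 1`) and `F(X)`. -/
theorem hyperspaces_onePointConnectification {X : Type*} [TopologicalSpace X]
    [TopologicalSpace.MetrizableSpace X] [TopologicalSpace.SeparableSpace X]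
    (h : HasSepMetrOnePointConnectification X) :
    HasSepMetrOnePointConnectification (HypK X) ∧
    (∀ n : ℕ, 1 ≤ n → HasSepMetrOnePointConnectification (HypFn n X)) ∧
    HasSepMetrOnePointConnectification (HypFin X) := by
  classical
  obtain ⟨Y, tY, hmetr, hsep, hconn, f, hf, p, hp⟩ := h
  haveI := hmetr
  haveI := hsep
  haveI := hconn
  have hXp : Set.range f = {p}ᶜ := by rw [← hp, compl_compl]
  have hpnotin : p ∉ Set.range f := by rw [hXp]; exact fun h => h rfl
  refine ⟨?_, ?_, ?_⟩
  · -- K(X)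
    exact VietHelp.assemble (fun F : Set X => F.Nonempty ∧ IsCompact F) Y f hf p hXp
      (fun G : Set Y => G.Nonempty ∧ IsCompact G)
      (fun F h => h.1)
      (fun G h _ => h)
      (fun F h => ⟨h.1.image f, h.2.image hf.continuous⟩)
      (fun G hR hsub => by
        constructor
        · obtain ⟨y, hy⟩ := hR.1
          obtain ⟨x, rfl⟩ := hsub hy
          exact ⟨x, hy⟩
        · rw [hf.isCompact_iff, Set.image_preimage_eq_of_subset hsub]
          exact hR.2)
      ⟨singleton_nonempty p, isCompact_singleton⟩
      (VietHelp.isConnected_bK p)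
  · -- F_n(X)
    intro n hn
    obtain ⟨m, rfl⟩ : ∃ m, n = m + 1 := ⟨n - 1, (Nat.succ_pred_eq_of_pos hn).symm⟩
    exact VietHelp.assemble (fun F : Set X => F.Nonempty ∧ F.Finite ∧ F.ncard ≤ m + 1) Y f hf p hXp
      (fun G : Set Y => G.Nonempty ∧ G.Finite ∧ G.ncard ≤ m + 1)
      (fun F h => h.1)
      (fun G h _ => ⟨h.1, h.2.1.isCompact⟩)
      (fun F h => ⟨h.1.image f, h.2.1.image f, by
        rw [Set.ncard_image_of_injective F hf.injective]; exact h.2.2⟩)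
      (fun G hR hsub => by
        refine ⟨?_, ?_, ?_⟩
        · obtain ⟨y, hy⟩ := hR.1
          obtain ⟨x, rfl⟩ := hsub hy
          exact ⟨x, hy⟩
        · exact hR.2.1.preimage hf.injective.injOn
        · have himg : f '' (f ⁻¹' G) = G := Set.image_preimage_eq_of_subset hsub
          have : (f '' (f ⁻¹' G)).ncard = (f ⁻¹' G).ncard :=
            Set.ncard_image_of_injective _ hf.injective
          rw [himg] at this
          rw [← this]
          exact hR.2.2)
      ⟨singleton_nonempty p, finite_singleton p, by rw [Set.ncard_singleton]; omega⟩
      (VietHelp.isConnected_bn p m)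
  · -- F(X)
    exact VietHelp.assemble (fun F : Set X => F.Nonempty ∧ F.Finite) Y f hf p hXp
      (fun G : Set Y => G.Nonempty ∧ G.Finite)
      (fun F h => h.1)
      (fun G h _ => ⟨h.1, h.2.isCompact⟩)
      (fun F h => ⟨h.1.image f, h.2.image f⟩)
      (fun G hR hsub => by
        constructor
        · obtain ⟨y, hy⟩ := hR.1
          obtain ⟨x, rfl⟩ := hsub hy
          exact ⟨x, hy⟩
        · exact hR.2.preimage hf.injective.injOn)
      ⟨singleton_nonempty p, finite_singleton p⟩
      (VietHelp.isConnected_bFin p)
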